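/- Deterministic ℓ1 estimation bound (core of Theorem 2): under the same hypotheses as the deterministic ℓ2 estimation bound — β̂ a global minimizer of L(β) + λ‖β‖₁ with λ > 0, β* supported on S with |S| = s ≥ 1, λ ≥ 2‖ξ‖_∞, restricted strong convexity Δᵀ G Δ ≥ α‖Δ‖₂² − κ‖Δ‖₁² on the cone ‖Δ_{S^c}‖₁ ≤ 3‖Δ_S‖₁ with α > 0, κ ≥ 0, and 16 κ s ≤ α/2 — one has ‖β̂ − β*‖₁ ≤ 24 λ s / α. -/

import Mathlib

open Matrix

/-- Deterministic ℓ1 estimation bound (core of Theorem 2 of the paper).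
Let `L(β) = (1/(2N)) (Y − Xβ)ᵀ W̃ (Y − Xβ)` with score
`ξ = −(1/N) Xᵀ W̃ (Y − Xβ*)` and Gram matrix `G = (1/N) Xᵀ W̃ X`, and let `β̂`
be a global minimizer of `Q(β) = L(β) + λ‖β‖₁`.  If `β*` is supported on `S`
with `|S| = s ≥ 1`, `λ ≥ 2‖ξ‖_∞`, restricted strong convexity
`Δᵀ G Δ ≥ α‖Δ‖₂² − κ‖Δ‖₁²` holds on the cone `‖Δ_{S^c}‖₁ ≤ 3‖Δ_S‖₁` with
`α > 0`, `κ ≥ 0`, and `16κs ≤ α/2`, then `‖β̂ − β*‖₁ ≤ 24λs/α`.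
(The sup norm `‖ξ‖` below is the norm of the Pi type `Fin p → ℝ`.) -/
theorem deterministic_l1_estimation_bound (N p s : ℕ) (hN : 0 < N) (hp : 0 < p)
    (X : Matrix (Fin N) (Fin p) ℝ)
    (Wt : Matrix (Fin N) (Fin N) ℝ) (hWt : Wt.PosSemidef)
    (Y : Fin N → ℝ) (βstar : Fin p → ℝ)
    (L : (Fin p → ℝ) → ℝ)
    (hL : ∀ β, L β = (1 / (2 * (N : ℝ))) *
      ((Y - X *ᵥ β) ⬝ᵥ (Wt *ᵥ (Y - X *ᵥ β))))
    (ξ : Fin p → ℝ)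
    (hξ : ξ = (-(1 / (N : ℝ))) • (Xᵀ *ᵥ (Wt *ᵥ (Y - X *ᵥ βstar))))
    (G : Matrix (Fin p) (Fin p) ℝ)
    (hG : G = (1 / (N : ℝ)) • (Xᵀ * Wt * X))
    (S : Finset (Fin p)) (hcard : S.card = s) (hs : 1 ≤ s)
    (hsupp : ∀ j ∉ S, βstar j = 0)
    (lam α κ : ℝ) (hlam : 0 < lam) (hα : 0 < α) (hκ : 0 ≤ κ)
    (hlamξ : 2 * ‖ξ‖ ≤ lam)
    (hRSC : ∀ Δ : Fin p → ℝ, (∑ j ∈ Sᶜ, |Δ j|) ≤ 3 * (∑ j ∈ S, |Δ j|) →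
      α * (∑ j, (Δ j) ^ 2) - κ * (∑ j, |Δ j|) ^ 2 ≤ Δ ⬝ᵥ (G *ᵥ Δ))
    (hκs : 16 * κ * s ≤ α / 2)
    (βhat : Fin p → ℝ)
    (hmin : ∀ β : Fin p → ℝ,
      L βhat + lam * (∑ j, |βhat j|) ≤ L β + lam * (∑ j, |β j|)) :
    (∑ j, |βhat j - βstar j|) ≤ 24 * lam * s / α := by

  have hNR : (0:ℝ) < (N : ℝ) := by exact_mod_cast hN
  have hNne : (N : ℝ) ≠ 0 := ne_of_gt hNR
  set Δ : Fin p → ℝ := βhat - βstar with hΔ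
  set u : Fin N → ℝ := X *ᵥ Δ with hu
  set r : Fin N → ℝ := Y - X *ᵥ βstar with hr
  -- transpose/dot product helper
  have htrans : ∀ (v : Fin N → ℝ) (w : Fin p → ℝ),
      (Xᵀ *ᵥ v) ⬝ᵥ w = v ⬝ᵥ (X *ᵥ w) := by
    intro v w
    rw [Matrix.mulVec_transpose, ← Matrix.dotProduct_mulVec]
  have hWtT : Wtᵀ = Wt := by
    have := hWt.1
    simpa [Matrix.IsHermitian, Matrix.conjTranspose_eq_transpose_of_trivial] using this
  have hsym : ∀ a b : Fin N → ℝ, a ⬝ᵥ (Wt *ᵥ b) = b ⬝ᵥ (Wt *ᵥ a) := by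
    intro a b
    have h1 : (Wtᵀ *ᵥ a) ⬝ᵥ b = a ⬝ᵥ (Wt *ᵥ b) := by
      rw [Matrix.mulVec_transpose, ← Matrix.dotProduct_mulVec]
    rw [← h1, hWtT, dotProduct_comm]
  -- the three key algebraic identities
  have e1 : Y - X *ᵥ βhat = r - u := by
    rw [hr, hu, hΔ, Matrix.mulVec_sub]
    abel
  have e2 : ξ ⬝ᵥ Δ = -(1 / (N:ℝ)) * (u ⬝ᵥ (Wt *ᵥ r)) := by
    rw [hξ, smul_dotProduct, smul_eq_mul, htrans, ← hu,
      dotProduct_comm]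
  have e3 : Δ ⬝ᵥ (G *ᵥ Δ) = (1 / (N:ℝ)) * (u ⬝ᵥ (Wt *ᵥ u)) := by
    rw [hG, Matrix.smul_mulVec, dotProduct_smul, smul_eq_mul]
    congr 1
    rw [← Matrix.mulVec_mulVec, ← Matrix.mulVec_mulVec, ← hu,
      dotProduct_comm, htrans, ← hu, dotProduct_comm]
  -- quadratic expansion of the loss
  have hexp : L βhat = L βstar + ξ ⬝ᵥ Δ + (1/2) * (Δ ⬝ᵥ (G *ᵥ Δ)) := by
    rw [hL βhat, hL βstar, e1, e2, e3, ← hr, Matrix.mulVec_sub,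
      dotProduct_sub, sub_dotProduct, sub_dotProduct,
      sub_dotProduct, hsym r u]
    field_simp
    ring
  set q : ℝ := Δ ⬝ᵥ (G *ᵥ Δ) with hq
  -- abbreviations for the l1/l2 quantities
  set aS : ℝ := ∑ j ∈ S, |Δ j| with haS
  set aSc : ℝ := ∑ j ∈ Sᶜ, |Δ j| with haSc
  set a : ℝ := ∑ j, |Δ j| with hadef
  set b : ℝ := ∑ j, (Δ j)^2 with hbdef
  have ha : a = aS + aSc := by
    rw [hadef, haS, haSc, Finset.sum_add_sum_compl]
  have haS0 : 0 ≤ aS := Finset.sum_nonneg fun j _ => abs_nonneg _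
  have haSc0 : 0 ≤ aSc := Finset.sum_nonneg fun j _ => abs_nonneg _
  have hb0 : 0 ≤ b := Finset.sum_nonneg fun j _ => sq_nonneg _
  have ha0 : 0 ≤ a := by rw [ha]; linarith
  -- l1 norm comparison
  have hnorm1 : (∑ j, |βstar j|) - (∑ j, |βhat j|) ≤ aS - aSc := by
    have h1 : (∑ j, |βstar j|) = ∑ j ∈ S, |βstar j| := by
      rw [← Finset.sum_add_sum_compl S fun j => |βstar j|]
      have : ∑ j ∈ Sᶜ, |βstar j| = 0 := by
        apply Finset.sum_eq_zero
        intro j hj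
        rw [hsupp j (Finset.mem_compl.mp hj), abs_zero]
      rw [this, add_zero]
    have h2 : (∑ j, |βhat j|) = (∑ j ∈ S, |βhat j|) + ∑ j ∈ Sᶜ, |βhat j| := by
      rw [Finset.sum_add_sum_compl]
    have h3 : ∑ j ∈ Sᶜ, |βhat j| = aSc := by
      rw [haSc]
      apply Finset.sum_congr rfl
      intro j hj
      rw [hΔ]
      simp [hsupp j (Finset.mem_compl.mp hj)]
    have h4 : (∑ j ∈ S, |βstar j|) - (∑ j ∈ S, |βhat j|) ≤ aS := by
      rw [haS, ← Finset.sum_sub_distrib]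
      apply Finset.sum_le_sum
      intro j _
      rw [hΔ]
      calc |βstar j| - |βhat j| ≤ |βstar j - βhat j| := abs_sub_abs_le_abs_sub _ _
        _ = |(βhat - βstar) j| := by rw [abs_sub_comm]; simp [sub_eq_add_neg]
    rw [h1, h2, h3]
    linarith
  -- score bound
  have hxinn : 0 ≤ lam / 2 - ‖ξ‖ := by linarith
  have hxi : |ξ ⬝ᵥ Δ| ≤ (lam / 2) * a := by
    have : ξ ⬝ᵥ Δ = ∑ j, ξ j * Δ j := rfl
    rw [this, hadef]
    calc |∑ j, ξ j * Δ j| ≤ ∑ j, |ξ j * Δ j| := Finset.abs_sum_le_sum_abs _ _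
      _ ≤ ∑ j, (lam / 2) * |Δ j| := by
          apply Finset.sum_le_sum
          intro j _
          rw [abs_mul]
          apply mul_le_mul_of_nonneg_right _ (abs_nonneg _)
          have := norm_le_pi_norm ξ j
          rw [Real.norm_eq_abs] at this
          linarith
      _ = (lam / 2) * ∑ j, |Δ j| := by rw [Finset.mul_sum]
  -- positive semidefiniteness of G
  have hpsd : 0 ≤ q := by
    rw [e3]
    have := hWt.dotProduct_mulVec_nonneg u
    have h0 : (0:ℝ) ≤ u ⬝ᵥ (Wt *ᵥ u) := by simpa using this
    positivity
  -- basic inequality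
  have hbasic := hmin βstar
  rw [hexp] at hbasic
  have hkey : ξ ⬝ᵥ Δ + (1/2) * q ≤ lam * (aS - aSc) := by
    have := mul_le_mul_of_nonneg_left hnorm1 (le_of_lt hlam)
    linarith [hbasic, this]
  have hG2 : (1/2) * q ≤ (lam/2) * a + lam * (aS - aSc) := by
    have hneg : -(ξ ⬝ᵥ Δ) ≤ (lam/2) * a := by
      have := neg_abs_le (ξ ⬝ᵥ Δ)
      linarith
    linarith
  -- cone condition
  have hcone : aSc ≤ 3 * aS := by
    have hla : lam * a = lam * aS + lam * aSc := by rw [ha]; ring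
    have h5 : lam * aSc ≤ lam * (3 * aS) := by linarith [hG2, hpsd, hla]
    exact le_of_mul_le_mul_left h5 hlam
  -- RSC
  have hconeS : (∑ j ∈ Sᶜ, |Δ j|) ≤ 3 * ∑ j ∈ S, |Δ j| := hcone
  have hrsc : α * b - κ * a ^ 2 ≤ q := hRSC Δ hconeS
  have hla2 : lam * a = lam * aS + lam * aSc := by rw [ha]; ring
  have hGupper : q ≤ 3 * lam * aS := by
    linarith [hG2, hla2, mul_nonneg (le_of_lt hlam) haSc0]
  -- Cauchy-Schwarz
  have hsR : (1:ℝ) ≤ (s:ℝ) := by exact_mod_cast hs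
  have hCS : aS^2 ≤ (s:ℝ) * b := by
    have h6 : (∑ j ∈ S, |Δ j|)^2 ≤ (S.card : ℝ) * ∑ j ∈ S, |Δ j|^2 := by
      exact sq_sum_le_card_mul_sum_sq (s := S) (f := fun j => |Δ j|)
    have h7 : ∑ j ∈ S, |Δ j|^2 = ∑ j ∈ S, (Δ j)^2 := by
      apply Finset.sum_congr rfl; intro j _; rw [sq_abs]
    have h8 : ∑ j ∈ S, (Δ j)^2 ≤ b := by
      rw [hbdef]
      exact Finset.sum_le_sum_of_subset_of_nonneg (Finset.subset_univ S)
        (fun j _ _ => sq_nonneg _)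
    rw [haS, hcard] at *
    calc (∑ j ∈ S, |Δ j|)^2 ≤ (s:ℝ) * ∑ j ∈ S, |Δ j|^2 := by rw [← hcard]; exact_mod_cast h6
      _ = (s:ℝ) * ∑ j ∈ S, (Δ j)^2 := by rw [h7]
      _ ≤ (s:ℝ) * b := by
          apply mul_le_mul_of_nonneg_left h8
          positivity
  -- kappa term absorption
  have ha4 : a ≤ 4 * aS := by rw [ha]; linarith
  have hka : κ * a^2 ≤ (α/2) * b := by
    have h9 : a^2 ≤ 16 * aS^2 := by
      calc a^2 ≤ (4*aS)^2 := pow_le_pow_left₀ ha0 ha4 2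
        _ = 16 * aS^2 := by ring
    have h10 : κ * a^2 ≤ κ * (16 * aS^2) := mul_le_mul_of_nonneg_left h9 hκ
    have h11 : 16 * κ * aS^2 ≤ 16 * κ * ((s:ℝ) * b) := by
      apply mul_le_mul_of_nonneg_left hCS
      positivity
    have h12 : 16 * κ * (s:ℝ) * b ≤ (α/2) * b :=
      mul_le_mul_of_nonneg_right hκs hb0
    linarith
  -- conclude l2-type bound and finish
  have hmain : (α/2) * b ≤ 3 * lam * aS := by linarith
  have haSsq : α * aS^2 ≤ 6 * lam * (s:ℝ) * aS := by
    have h13 : (α/2) * aS^2 ≤ (α/2) * ((s:ℝ) * b) :=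
      mul_le_mul_of_nonneg_left hCS (by linarith)
    have h14 : (s:ℝ) * ((α/2) * b) ≤ (s:ℝ) * (3 * lam * aS) :=
      mul_le_mul_of_nonneg_left hmain (by linarith)
    linarith
  have hgoal : (∑ j, |βhat j - βstar j|) = a := by
    rw [hadef]
    apply Finset.sum_congr rfl
    intro j _
    rw [hΔ]
    simp [Pi.sub_apply]
  rw [hgoal, le_div_iff₀ hα]
  rcases eq_or_lt_of_le haS0 with h | h
  · have ha5 : a ≤ 0 := by linarith [ha4]
    have ha6 : a * α ≤ 0 := mul_nonpos_of_nonpos_of_nonneg ha5 (le_of_lt hα)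
    have ha7 : (0:ℝ) ≤ 24 * lam * (s:ℝ) := by positivity
    linarith
  · have h15 : α * aS ≤ 6 * lam * (s:ℝ) :=
      le_of_mul_le_mul_right (by linarith [haSsq]) h
    have h16 := mul_le_mul_of_nonneg_left ha4 (le_of_lt hα)
    linarith [h15, h16]
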